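/- Let f = a_0 e - ∑_{i=1}^∞ a_i U^{-i}e with a_0 = 1, a_i ≥ 0, ∑_{i=1}^∞ a_i = 1, over an orthonormal martingale difference sequence (U^i e). Then the sequence σ_n = ‖S_n(f)‖₂ is nondecreasing: σ_n ≤ σ_{n+1} for all n ≥ 1. -/

import Mathlib

open MeasureTheory Filter Finset
open scoped ENNReal

/-- The `ℤ`-power of a measurable equivalence `T`, i.e. `T^i`. -/
noncomputable def measIter {Ω : Type*} [MeasurableSpace Ω] (T : Ω ≃ᵐ Ω) : ℤ → Ω → Ω :=
  fun i => if 0 ≤ i then (⇑T)^[i.toNat] else (⇑T.symm)^[(-i).toNat]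

section Stmt16Aux

variable {Ω : Type*} [MeasurableSpace Ω] (T : Ω ≃ᵐ Ω)

private lemma measIter_eq_perm (i : ℤ) : measIter T i = ⇑(T.toEquiv ^ i) := by
  rcases le_or_gt 0 i with h | h
  · obtain ⟨n, rfl⟩ := Int.eq_ofNat_of_zero_le h
    simp only [measIter, if_pos h, Int.toNat_natCast, zpow_natCast]
    rw [← Equiv.Perm.iterate_eq_pow]
    rfl
  · obtain ⟨n, rfl⟩ : ∃ n : ℕ, i = -(n : ℤ) := ⟨i.natAbs, by omega⟩
    simp only [measIter, if_neg (by omega : ¬ (0:ℤ) ≤ -(n:ℤ)), neg_neg, Int.toNat_natCast,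
      zpow_neg, zpow_natCast]
    rw [← inv_pow, ← Equiv.Perm.iterate_eq_pow]
    rfl

private lemma measIter_add (i j : ℤ) (ω : Ω) :
    measIter T i (measIter T j ω) = measIter T (i + j) ω := by
  simp only [measIter_eq_perm, zpow_add]
  rfl

private lemma measIter_measurable (i : ℤ) : Measurable (measIter T i) := by
  unfold measIter
  split_ifs
  · exact T.measurable.iterate _
  · exact T.symm.measurable.iterate _

/-- `measIter` as a measurable equivalence. -/
private noncomputable def measIterE (i : ℤ) : Ω ≃ᵐ Ω where
  toFun := measIter T i
  invFun := measIter T (-i)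
  left_inv := fun ω => by rw [measIter_add]; simp [measIter]
  right_inv := fun ω => by rw [measIter_add]; simp [measIter]
  measurable_toFun := measIter_measurable T i
  measurable_invFun := measIter_measurable T (-i)

private lemma measIterE_coe (i : ℤ) : ⇑(measIterE T i) = measIter T i := rfl

private lemma measIter_measurePreserving {μ : Measure Ω} (hT : MeasurePreserving T μ μ)
    (i : ℤ) : MeasurePreserving (measIter T i) μ μ := by
  unfold measIter
  split_ifs
  · exact hT.iterate _
  · exact (MeasurePreserving.symm T hT).iterate _

private lemma integrable_mul_of_memL2 {μ : Measure Ω} {f g : Ω → ℝ}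
    (hf : MemLp f 2 μ) (hg : MemLp g 2 μ) :
    Integrable (fun ω => f ω * g ω) μ := by
  have h : MemLp (f • g) 1 μ :=
    hg.smul hf (hpqr := ⟨by rw [ENNReal.inv_two_add_inv_two, inv_one]⟩)
  rw [memLp_one_iff_integrable] at h
  exact h

private lemma int_sq_eq {μ : Measure Ω} {v : Ω → ℝ} (hv : MemLp v 2 μ) :
    ∫ ω, (v ω) ^ 2 ∂μ = ((eLpNorm v 2 μ).toReal) ^ 2 := by
  have h := hv.eLpNorm_eq_integral_rpow_norm (by norm_num) (by norm_num)
  have h2 : (2 : ℝ≥0∞).toReal = 2 := by norm_num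
  rw [h2] at h
  have hint : ∀ ω, ‖v ω‖ ^ (2:ℝ) = (v ω)^2 := fun ω => by
    rw [show (2:ℝ) = ((2:ℕ):ℝ) by norm_num, Real.rpow_natCast, Real.norm_eq_abs, sq_abs]
  simp only [hint] at h
  have hnn : 0 ≤ ∫ ω, (v ω)^2 ∂μ := integral_nonneg fun ω => sq_nonneg _
  rw [h, ENNReal.toReal_ofReal (Real.rpow_nonneg hnn _)]
  rw [← Real.rpow_natCast ((∫ ω, (v ω)^2 ∂μ) ^ ((2:ℝ)⁻¹)) 2, ← Real.rpow_mul hnn]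
  norm_num

private lemma expand {μ : Measure Ω} [IsProbabilityMeasure μ]
    (hT : MeasurePreserving T μ μ) {e : Ω → ℝ} (he2 : MemLp e 2 μ)
    (hnorm : ∫ ω, (e ω) ^ 2 ∂μ = 1)
    (hON : ∀ i j : ℤ, i ≠ j → ∫ ω, e (measIter T i ω) * e (measIter T j ω) ∂μ = 0)
    (c : ℤ → ℝ) (s : Finset ℤ) :
    ∫ ω, (∑ u ∈ s, c u * e (measIter T u ω)) ^ 2 ∂μ = ∑ u ∈ s, (c u) ^ 2 := by
  have heu : ∀ u : ℤ, MemLp (fun ω => e (measIter T u ω)) 2 μ :=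
    fun u => he2.comp_measurePreserving (measIter_measurePreserving T hT u)
  have hint : ∀ u v : ℤ,
      Integrable (fun ω => (c u * e (measIter T u ω)) * (c v * e (measIter T v ω))) μ :=
    fun u v => integrable_mul_of_memL2 ((heu u).const_mul (c u)) ((heu v).const_mul (c v))
  have key : ∀ u v : ℤ, ∫ ω, (c u * e (measIter T u ω)) * (c v * e (measIter T v ω)) ∂μ
      = if u = v then c u * c v else 0 := by
    intro u v
    have hre : (fun ω => (c u * e (measIter T u ω)) * (c v * e (measIter T v ω)))
        = fun ω => (c u * c v) * (e (measIter T u ω) * e (measIter T v ω)) := by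
      funext ω; ring
    rw [hre, integral_const_mul]
    rcases eq_or_ne u v with rfl | huv
    · have hcomp : ∫ ω, e (measIter T u ω) * e (measIter T u ω) ∂μ
          = ∫ x, e x * e x ∂μ := by
        have h := MeasurePreserving.integral_comp'
          (f := measIterE T u) (μ := μ) (ν := μ)
          (by rw [measIterE_coe]; exact measIter_measurePreserving T hT u)
          (fun x => e x * e x)
        rw [measIterE_coe] at h
        exact h
      rw [hcomp, if_pos rfl]
      have hone : ∫ x, e x * e x ∂μ = 1 := by
        simp only [← pow_two]; exact hnorm
      rw [hone, mul_one]
    · rw [hON u v huv, mul_zero, if_neg huv]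
  calc ∫ ω, (∑ u ∈ s, c u * e (measIter T u ω)) ^ 2 ∂μ
      = ∫ ω, ∑ u ∈ s, ∑ v ∈ s, (c u * e (measIter T u ω)) * (c v * e (measIter T v ω)) ∂μ := by
        congr 1; funext ω; rw [pow_two, Finset.sum_mul_sum]
    _ = ∑ u ∈ s, ∑ v ∈ s, ∫ ω, (c u * e (measIter T u ω)) * (c v * e (measIter T v ω)) ∂μ := by
        rw [integral_finset_sum s (fun u _ => integrable_finset_sum s (fun v _ => hint u v))]
        exact Finset.sum_congr rfl fun u _ => integral_finset_sum s (fun v _ => hint u v)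
    _ = ∑ u ∈ s, ∑ v ∈ s, if u = v then c u * c v else 0 :=
        Finset.sum_congr rfl fun u _ => Finset.sum_congr rfl fun v _ => key u v
    _ = ∑ u ∈ s, (c u) ^ 2 := by
        refine Finset.sum_congr rfl fun u hu => ?_
        rw [Finset.sum_ite_eq s u (fun v => c u * c v), if_pos hu, pow_two]

private lemma tendsto_int_sq {μ : Measure Ω} (v : Ω → ℝ) (u : ℕ → Ω → ℝ) (hv : MemLp v 2 μ)
    (hu : ∀ N, MemLp (u N) 2 μ)
    (h : Tendsto (fun N => eLpNorm (fun ω => u N ω - v ω) 2 μ) atTop (nhds 0)) :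
    Tendsto (fun N => ∫ ω, (u N ω) ^ 2 ∂μ) atTop (nhds (∫ ω, (v ω) ^ 2 ∂μ)) := by
  have hd : ∀ N, eLpNorm (fun ω => u N ω - v ω) 2 μ ≠ ⊤ :=
    fun N => ((hu N).sub hv).eLpNorm_ne_top
  have hx : ∀ N, |(eLpNorm (u N) 2 μ).toReal - (eLpNorm v 2 μ).toReal|
      ≤ (eLpNorm (fun ω => u N ω - v ω) 2 μ).toReal := by
    intro N
    rw [abs_sub_le_iff]
    constructor
    · have h1 : eLpNorm (u N) 2 μ
          ≤ eLpNorm v 2 μ + eLpNorm (fun ω => u N ω - v ω) 2 μ := by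
        have heq : (fun ω => u N ω) = fun ω => v ω + (u N ω - v ω) := by funext ω; ring
        calc eLpNorm (u N) 2 μ = eLpNorm (fun ω => v ω + (u N ω - v ω)) 2 μ := by rw [← heq]
          _ ≤ _ := eLpNorm_add_le hv.1 ((hu N).sub hv).1 (by norm_num)
      have h2 := ENNReal.toReal_mono
        (ENNReal.add_ne_top.2 ⟨hv.eLpNorm_ne_top, hd N⟩) h1
      rw [ENNReal.toReal_add hv.eLpNorm_ne_top (hd N)] at h2
      linarith
    · have h1 : eLpNorm v 2 μ
          ≤ eLpNorm (u N) 2 μ + eLpNorm (fun ω => u N ω - v ω) 2 μ := by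
        have heq : (fun ω => v ω) = fun ω => u N ω + -(u N ω - v ω) := by funext ω; ring
        calc eLpNorm v 2 μ = eLpNorm (fun ω => u N ω + -(u N ω - v ω)) 2 μ := by rw [← heq]
          _ ≤ eLpNorm (u N) 2 μ + eLpNorm (fun ω => -(u N ω - v ω)) 2 μ :=
              eLpNorm_add_le (hu N).1 (((hu N).sub hv).neg).1 (by norm_num)
          _ = _ := by congr 1; exact eLpNorm_neg (fun ω => u N ω - v ω) 2 μ
      have h2 := ENNReal.toReal_mono
        (ENNReal.add_ne_top.2 ⟨(hu N).eLpNorm_ne_top, hd N⟩) h1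
      rw [ENNReal.toReal_add (hu N).eLpNorm_ne_top (hd N)] at h2
      linarith
  have hdt : Tendsto (fun N => (eLpNorm (fun ω => u N ω - v ω) 2 μ).toReal) atTop (nhds 0) := by
    have := (ENNReal.tendsto_toReal (by simp : (0:ℝ≥0∞) ≠ ⊤)).comp h
    simpa [Function.comp_def] using this
  have hsub : Tendsto (fun N => (eLpNorm (u N) 2 μ).toReal - (eLpNorm v 2 μ).toReal)
      atTop (nhds 0) := squeeze_zero_norm hx hdt
  have hxt : Tendsto (fun N => (eLpNorm (u N) 2 μ).toReal) atTop
      (nhds ((eLpNorm v 2 μ).toReal)) := by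
    have := hsub.add_const ((eLpNorm v 2 μ).toReal)
    simpa using this
  have hfun : (fun N => ∫ ω, (u N ω) ^ 2 ∂μ)
      = fun N => ((eLpNorm (u N) 2 μ).toReal) ^ 2 := funext fun N => int_sq_eq (hu N)
  rw [hfun, int_sq_eq hv]
  exact hxt.pow 2

end Stmt16Aux

/-- Truncated version of `f`. -/
private noncomputable def bcoef (a : ℕ → ℝ) (N : ℕ) (k : ℤ) : ℝ :=
  if k = 0 then 1 else if 1 ≤ k ∧ k ≤ (N:ℤ) then -(a k.toNat) else 0

private noncomputable def Ccoef (a : ℕ → ℝ) (N m : ℕ) (u : ℤ) : ℝ :=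
  ∑ j ∈ Finset.range m, bcoef a N ((j:ℤ) - u)

private lemma coef_ineq (a : ℕ → ℝ) (hapos : ∀ i : ℕ, 1 ≤ i → 0 ≤ a i) (N m : ℕ) :
    ∑ u ∈ Finset.Icc (-(N:ℤ)) ((m:ℤ)-1), (Ccoef a N m u)^2
      ≤ ∑ u ∈ Finset.Icc (-(N:ℤ)) (m:ℤ), (Ccoef a N (m+1) u)^2 := by
  have hb_nonpos : ∀ k : ℤ, 1 ≤ k → bcoef a N k ≤ 0 := by
    intro k hk
    unfold bcoef
    split_ifs with h1 h2
    · exact absurd h1 (by omega)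
    · exact neg_nonpos.2 (hapos _ (by omega))
    · exact le_refl _
  have hC_nonpos : ∀ (u : ℤ), u ≤ -1 → ∀ m' : ℕ, Ccoef a N m' u ≤ 0 := by
    intro u hu m'
    exact Finset.sum_nonpos fun j _ => hb_nonpos _ (by omega)
  have hC_succ : ∀ (m' : ℕ) (u : ℤ),
      Ccoef a N (m'+1) u = Ccoef a N m' u + bcoef a N ((m':ℤ) - u) := by
    intro m' u
    unfold Ccoef
    rw [Finset.sum_range_succ]
  have hC_shift : ∀ (m' : ℕ) (u : ℤ), 0 ≤ u → Ccoef a N (m'+1) (u+1) = Ccoef a N m' u := by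
    intro m' u hu
    unfold Ccoef
    rw [Finset.sum_range_succ']
    have h0 : bcoef a N (((0:ℕ):ℤ) - (u+1)) = 0 := by
      unfold bcoef
      rw [if_neg (by omega), if_neg (by omega)]
    simp only [Nat.cast_add, Nat.cast_one, Nat.cast_zero] at h0 ⊢
    rw [h0, add_zero]
    exact Finset.sum_congr rfl fun j _ => by rw [show (j:ℤ) + 1 - (u+1) = (j:ℤ) - u by ring]
  have hIoc : ∀ x : ℤ, Finset.Icc (-(N:ℤ)) x = Finset.Ioc (-(N:ℤ)-1) x := by
    intro x; ext u; simp only [Finset.mem_Icc, Finset.mem_Ioc]; omega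
  rw [hIoc, hIoc]
  have hd1 : ∀ x : ℤ, Disjoint (Finset.Ioc (-(N:ℤ)-1) (-1)) (Finset.Ioc (-1:ℤ) x) := by
    intro x
    rw [Finset.disjoint_left]
    intro u h1 h2
    simp only [Finset.mem_Ioc] at h1 h2
    omega
  have hd2 : Disjoint (Finset.Ioc (-1:ℤ) 0) (Finset.Ioc (0:ℤ) (m:ℤ)) := by
    rw [Finset.disjoint_left]
    intro u h1 h2
    simp only [Finset.mem_Ioc] at h1 h2
    omega
  rw [show Finset.Ioc (-(N:ℤ)-1) ((m:ℤ)-1)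
      = Finset.Ioc (-(N:ℤ)-1) (-1) ∪ Finset.Ioc (-1:ℤ) ((m:ℤ)-1) from
    (Finset.Ioc_union_Ioc_eq_Ioc (by omega) (by omega)).symm]
  rw [show Finset.Ioc (-(N:ℤ)-1) (m:ℤ)
      = Finset.Ioc (-(N:ℤ)-1) (-1) ∪ Finset.Ioc (-1:ℤ) (m:ℤ) from
    (Finset.Ioc_union_Ioc_eq_Ioc (by omega) (by omega)).symm]
  rw [show Finset.Ioc (-1:ℤ) (m:ℤ) = Finset.Ioc (-1:ℤ) 0 ∪ Finset.Ioc (0:ℤ) (m:ℤ) from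
    (Finset.Ioc_union_Ioc_eq_Ioc (by omega) (by omega)).symm]
  rw [Finset.sum_union (hd1 _)]
  have hd3 : Disjoint (Finset.Ioc (-(N:ℤ)-1) (-1))
      (Finset.Ioc (-1:ℤ) 0 ∪ Finset.Ioc (0:ℤ) (m:ℤ)) := by
    rw [Finset.disjoint_left]
    intro u h1 h2
    simp only [Finset.mem_Ioc, Finset.mem_union] at h1 h2
    omega
  rw [Finset.sum_union hd3]
  rw [Finset.sum_union hd2]
  have hpart1 : ∑ u ∈ Finset.Ioc (-(N:ℤ)-1) (-1), (Ccoef a N m u)^2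
      ≤ ∑ u ∈ Finset.Ioc (-(N:ℤ)-1) (-1), (Ccoef a N (m+1) u)^2 := by
    refine Finset.sum_le_sum fun u hu => ?_
    simp only [Finset.mem_Ioc] at hu
    have h1 := hC_nonpos u (by omega) m
    have h1' := hC_nonpos u (by omega) (m+1)
    have h3 : bcoef a N ((m:ℤ) - u) ≤ 0 := hb_nonpos _ (by omega)
    have h2 := hC_succ m u
    have key := sq_le_sq' (by linarith : -(-(Ccoef a N (m+1) u)) ≤ Ccoef a N m u)
      (by linarith : Ccoef a N m u ≤ -(Ccoef a N (m+1) u))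
    rwa [neg_sq] at key
  have hpart2 : ∑ u ∈ Finset.Ioc (-1:ℤ) ((m:ℤ)-1), (Ccoef a N m u)^2
      = ∑ u ∈ Finset.Ioc (0:ℤ) (m:ℤ), (Ccoef a N (m+1) u)^2 := by
    refine Finset.sum_nbij' (fun u => u + 1) (fun u => u - 1) ?_ ?_ ?_ ?_ ?_
    · intro u hu; simp only [Finset.mem_Ioc] at *; omega
    · intro u hu; simp only [Finset.mem_Ioc] at *; omega
    · intro u _; ring
    · intro u _; ring
    · intro u hu
      simp only [Finset.mem_Ioc] at hu
      rw [hC_shift m u (by omega)]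
  have hpart3 : (0:ℝ) ≤ ∑ u ∈ Finset.Ioc (-1:ℤ) 0, (Ccoef a N (m+1) u)^2 :=
    Finset.sum_nonneg fun u _ => sq_nonneg _
  calc ∑ u ∈ Finset.Ioc (-(N:ℤ)-1) (-1), (Ccoef a N m u)^2
        + ∑ u ∈ Finset.Ioc (-1:ℤ) ((m:ℤ)-1), (Ccoef a N m u)^2
      ≤ ∑ u ∈ Finset.Ioc (-(N:ℤ)-1) (-1), (Ccoef a N (m+1) u)^2
        + ∑ u ∈ Finset.Ioc (0:ℤ) (m:ℤ), (Ccoef a N (m+1) u)^2 := by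
        rw [← hpart2]; exact add_le_add hpart1 (le_refl _)
    _ ≤ _ := by linarith

/-- The truncation `g_N = a₀ e - ∑_{i=1}^N a_i U^{-i} e`. -/
private noncomputable def gfun {Ω : Type*} [MeasurableSpace Ω] (T : Ω ≃ᵐ Ω) (e : Ω → ℝ)
    (a : ℕ → ℝ) (N : ℕ) (ω : Ω) : ℝ :=
  a 0 * e ω - ∑ i ∈ Finset.Icc 1 N, a i * e (measIter T (-(i : ℤ)) ω)

private lemma key_pointwise {Ω : Type*} [MeasurableSpace Ω] (T : Ω ≃ᵐ Ω) (e : Ω → ℝ)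
    (a : ℕ → ℝ) (ha0 : a 0 = 1) (N m : ℕ) (ω : Ω) :
    ∑ j ∈ Finset.range m, gfun T e a N (measIter T (j:ℤ) ω)
      = ∑ u ∈ Finset.Icc (-(N:ℤ)) ((m:ℤ)-1), Ccoef a N m u * e (measIter T u ω) := by
  simp only [gfun]
  have hstep : ∀ j : ℕ, j < m →
      a 0 * e (measIter T (j:ℤ) ω)
        - ∑ i ∈ Finset.Icc 1 N, a i * e (measIter T (-(i:ℤ)) (measIter T (j:ℤ) ω))
      = ∑ u ∈ Finset.Icc (-(N:ℤ)) ((m:ℤ)-1), bcoef a N ((j:ℤ)-u) * e (measIter T u ω) := by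
    intro j hj
    have hjmem : (j:ℤ) ∈ Finset.Icc (-(N:ℤ)) ((m:ℤ)-1) := by
      simp only [Finset.mem_Icc]; omega
    symm
    rw [← Finset.add_sum_erase _ _ hjmem]
    have h1 : bcoef a N ((j:ℤ) - (j:ℤ)) * e (measIter T (j:ℤ) ω)
        = a 0 * e (measIter T (j:ℤ) ω) := by
      rw [sub_self]
      simp [bcoef, ha0]
    rw [h1]
    have hsub : Finset.Icc ((j:ℤ)-N) ((j:ℤ)-1)
        ⊆ (Finset.Icc (-(N:ℤ)) ((m:ℤ)-1)).erase (j:ℤ) := by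
      intro u hu
      simp only [Finset.mem_Icc, Finset.mem_erase] at *
      omega
    have hzero : ∀ u ∈ (Finset.Icc (-(N:ℤ)) ((m:ℤ)-1)).erase (j:ℤ),
        u ∉ Finset.Icc ((j:ℤ)-N) ((j:ℤ)-1) →
        bcoef a N ((j:ℤ)-u) * e (measIter T u ω) = 0 := by
      intro u hu hnu
      simp only [Finset.mem_Icc, Finset.mem_erase] at hu hnu
      have hb : bcoef a N ((j:ℤ)-u) = 0 := by
        unfold bcoef
        rw [if_neg (by omega), if_neg (by omega)]
      rw [hb, zero_mul]
    have hS : ∑ u ∈ (Finset.Icc (-(N:ℤ)) ((m:ℤ)-1)).erase (j:ℤ),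
        bcoef a N ((j:ℤ)-u) * e (measIter T u ω)
        = -∑ i ∈ Finset.Icc 1 N, a i * e (measIter T (-(i:ℤ)) (measIter T (j:ℤ) ω)) := by
      rw [← Finset.sum_subset hsub hzero]
      rw [← Finset.sum_neg_distrib]
      refine Finset.sum_nbij' (fun u => ((j:ℤ) - u).toNat) (fun i => (j:ℤ) - (i:ℕ))
        ?_ ?_ ?_ ?_ ?_
      · intro u hu; simp only [Finset.mem_Icc] at *; omega
      · intro i hi; simp only [Finset.mem_Icc] at *; omega
      · intro u hu; simp only [Finset.mem_Icc] at hu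
        show (j:ℤ) - ((((j:ℤ)-u).toNat : ℕ):ℤ) = u; omega
      · intro i hi; simp only [Finset.mem_Icc] at hi
        show (((j:ℤ) - ((j:ℤ) - ((i:ℕ):ℤ))).toNat) = i; omega
      · intro u hu
        simp only [Finset.mem_Icc] at hu
        have hcast : ((((j:ℤ)-u).toNat : ℕ) : ℤ) = (j:ℤ) - u := Int.toNat_of_nonneg (by omega)
        rw [measIter_add]
        rw [show -((((j:ℤ)-u).toNat : ℕ) : ℤ) + (j:ℤ) = u by omega]
        have hb : bcoef a N ((j:ℤ)-u) = -(a (((j:ℤ)-u).toNat)) := by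
          unfold bcoef
          rw [if_neg (by omega), if_pos ⟨by omega, by omega⟩]
        rw [hb]
        ring
    rw [hS, ← sub_eq_add_neg]
  calc ∑ j ∈ Finset.range m, (a 0 * e (measIter T (j:ℤ) ω)
        - ∑ i ∈ Finset.Icc 1 N, a i * e (measIter T (-(i:ℤ)) (measIter T (j:ℤ) ω)))
      = ∑ j ∈ Finset.range m, ∑ u ∈ Finset.Icc (-(N:ℤ)) ((m:ℤ)-1),
          bcoef a N ((j:ℤ)-u) * e (measIter T u ω) :=
        Finset.sum_congr rfl fun j hj => hstep j (Finset.mem_range.1 hj)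
    _ = ∑ u ∈ Finset.Icc (-(N:ℤ)) ((m:ℤ)-1), ∑ j ∈ Finset.range m,
          bcoef a N ((j:ℤ)-u) * e (measIter T u ω) := Finset.sum_comm
    _ = ∑ u ∈ Finset.Icc (-(N:ℤ)) ((m:ℤ)-1), Ccoef a N m u * e (measIter T u ω) := by
        refine Finset.sum_congr rfl fun u _ => ?_
        rw [Ccoef, Finset.sum_mul]

set_option maxHeartbeats 1000000 in
/-- For `f = a₀ e - ∑_{i≥1} a_i U^{-i} e` with `a₀ = 1`, `a_i ≥ 0`, `∑_{i≥1} a_i = 1`,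
the sequence `σ_n = ‖S_n(f)‖₂` is nondecreasing. -/
theorem stmt16 {Ω : Type*} [MeasurableSpace Ω] (μ : Measure Ω) [IsProbabilityMeasure μ]
    (T : Ω ≃ᵐ Ω) (hT : MeasurePreserving T μ μ)
    (F : ℤ → MeasurableSpace Ω) (hFmono : Monotone F)
    (hFle : ∀ i, F i ≤ (inferInstance : MeasurableSpace Ω))
    (hFT : ∀ i : ℤ, F (i + 1) = (F i).comap T)
    (e : Ω → ℝ) (he2 : MemLp e 2 μ) (hemeas : StronglyMeasurable[F 0] e)
    (hmd : μ[e|F (-1)] =ᵐ[μ] 0) (hnorm : ∫ ω, (e ω) ^ 2 ∂μ = 1)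
    (hON : ∀ i j : ℤ, i ≠ j → ∫ ω, e (measIter T i ω) * e (measIter T j ω) ∂μ = 0)
    (a : ℕ → ℝ) (ha0 : a 0 = 1) (hapos : ∀ i : ℕ, 1 ≤ i → 0 ≤ a i)
    (hasum : HasSum (fun i : ℕ => a (i + 1)) 1)
    (f : Ω → ℝ) (hf2 : MemLp f 2 μ)
    (hf : Tendsto (fun N : ℕ => eLpNorm
        (fun ω => f ω - (a 0 * e ω - ∑ i ∈ Finset.Icc 1 N, a i * e (measIter T (-(i : ℤ)) ω))) 2 μ)
      atTop (nhds 0)) :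
    ∀ n : ℕ, 1 ≤ n →
      Real.sqrt (∫ ω, (∑ j ∈ Finset.range n, f (measIter T (j : ℤ) ω)) ^ 2 ∂μ)
        ≤ Real.sqrt (∫ ω, (∑ j ∈ Finset.range (n + 1), f (measIter T (j : ℤ) ω)) ^ 2 ∂μ) := by
  intro n hn
  have heu : ∀ u : ℤ, MemLp (fun ω => e (measIter T u ω)) 2 μ :=
    fun u => he2.comp_measurePreserving (measIter_measurePreserving T hT u)
  have hf' : Tendsto (fun N : ℕ => eLpNorm (fun ω => f ω - gfun T e a N ω) 2 μ)
      atTop (nhds 0) := hf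
  have hval : ∀ (m N : ℕ),
      ∫ ω, (∑ j ∈ Finset.range m, gfun T e a N (measIter T (j:ℤ) ω))^2 ∂μ
        = ∑ u ∈ Finset.Icc (-(N:ℤ)) ((m:ℤ)-1), (Ccoef a N m u)^2 := by
    intro m N
    calc ∫ ω, (∑ j ∈ Finset.range m, gfun T e a N (measIter T (j:ℤ) ω))^2 ∂μ
        = ∫ ω, (∑ u ∈ Finset.Icc (-(N:ℤ)) ((m:ℤ)-1),
            Ccoef a N m u * e (measIter T u ω))^2 ∂μ := by
          congr 1; funext ω; rw [key_pointwise T e a ha0 N m ω]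
      _ = _ := expand T hT he2 hnorm hON (Ccoef a N m) _
  have hgmem : ∀ N, MemLp (gfun T e a N) 2 μ := by
    intro N
    exact (he2.const_mul (a 0)).sub
      (memLp_finset_sum _ fun i _ => (heu (-(i:ℤ))).const_mul (a i))
  have hgTmem : ∀ (m N : ℕ),
      MemLp (fun ω => ∑ j ∈ Finset.range m, gfun T e a N (measIter T (j:ℤ) ω)) 2 μ :=
    fun m N => memLp_finset_sum _ fun j _ =>
      (hgmem N).comp_measurePreserving (measIter_measurePreserving T hT j)
  have hfTmem : ∀ m : ℕ,
      MemLp (fun ω => ∑ j ∈ Finset.range m, f (measIter T (j:ℤ) ω)) 2 μ :=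
    fun m => memLp_finset_sum _ fun j _ =>
      hf2.comp_measurePreserving (measIter_measurePreserving T hT j)
  have hlim : ∀ m : ℕ,
      Tendsto (fun N => ∫ ω, (∑ j ∈ Finset.range m, gfun T e a N (measIter T (j:ℤ) ω))^2 ∂μ)
        atTop (nhds (∫ ω, (∑ j ∈ Finset.range m, f (measIter T (j:ℤ) ω))^2 ∂μ)) := by
    intro m
    refine tendsto_int_sq _ _ (hfTmem m) (fun N => hgTmem m N) ?_
    have hbound : ∀ N : ℕ, eLpNorm (fun ω =>
          (∑ j ∈ Finset.range m, gfun T e a N (measIter T (j:ℤ) ω))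
          - ∑ j ∈ Finset.range m, f (measIter T (j:ℤ) ω)) 2 μ
        ≤ (m : ℝ≥0∞) * eLpNorm (fun ω => f ω - gfun T e a N ω) 2 μ := by
      intro N
      have hdm : AEStronglyMeasurable (fun ω => gfun T e a N ω - f ω) μ :=
        ((hgmem N).sub hf2).1
      have hdmj : ∀ j : ℕ, AEStronglyMeasurable
          (fun ω => gfun T e a N (measIter T (j:ℤ) ω) - f (measIter T (j:ℤ) ω)) μ :=
        fun j => (((hgmem N).sub hf2).comp_measurePreserving
          (measIter_measurePreserving T hT j)).1
      have heq : (fun ω => (∑ j ∈ Finset.range m, gfun T e a N (measIter T (j:ℤ) ω))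
            - ∑ j ∈ Finset.range m, f (measIter T (j:ℤ) ω))
          = ∑ j ∈ Finset.range m,
              fun ω => gfun T e a N (measIter T (j:ℤ) ω) - f (measIter T (j:ℤ) ω) := by
        funext ω
        simp only [Finset.sum_apply]
        rw [Finset.sum_sub_distrib]
      rw [heq]
      calc eLpNorm (∑ j ∈ Finset.range m,
              fun ω => gfun T e a N (measIter T (j:ℤ) ω) - f (measIter T (j:ℤ) ω)) 2 μ
          ≤ ∑ j ∈ Finset.range m, eLpNorm
              (fun ω => gfun T e a N (measIter T (j:ℤ) ω) - f (measIter T (j:ℤ) ω)) 2 μ :=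
            eLpNorm_sum_le (fun j _ => hdmj j) (by norm_num)
        _ = ∑ _j ∈ Finset.range m, eLpNorm (fun ω => gfun T e a N ω - f ω) 2 μ := by
            refine Finset.sum_congr rfl fun j _ => ?_
            have h := eLpNorm_comp_measurePreserving (p := 2) (ν := μ)
              (g := fun ω => gfun T e a N ω - f ω) (f := measIter T (j:ℤ))
              hdm (measIter_measurePreserving T hT j)
            exact h
        _ = (m : ℝ≥0∞) * eLpNorm (fun ω => gfun T e a N ω - f ω) 2 μ := by
            rw [Finset.sum_const, Finset.card_range, nsmul_eq_mul]
        _ = (m : ℝ≥0∞) * eLpNorm (fun ω => f ω - gfun T e a N ω) 2 μ := by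
            congr 1
            exact eLpNorm_sub_comm (gfun T e a N) f 2 μ
    have h0 : Tendsto (fun N : ℕ => (m:ℝ≥0∞) * eLpNorm (fun ω => f ω - gfun T e a N ω) 2 μ)
        atTop (nhds 0) := by
      have := ENNReal.Tendsto.const_mul (a := (m:ℝ≥0∞)) hf' (Or.inr (by simp))
      simpa using this
    exact tendsto_of_tendsto_of_tendsto_of_le_of_le tendsto_const_nhds h0
      (fun N => zero_le) hbound
  have hfin : ∫ ω, (∑ j ∈ Finset.range n, f (measIter T (j:ℤ) ω))^2 ∂μ
      ≤ ∫ ω, (∑ j ∈ Finset.range (n+1), f (measIter T (j:ℤ) ω))^2 ∂μ := by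
    refine le_of_tendsto_of_tendsto' (hlim n) (hlim (n+1)) fun N => ?_
    rw [hval n N, hval (n+1) N]
    have hcast : (((n+1:ℕ)):ℤ) - 1 = (n:ℤ) := by push_cast; ring
    rw [hcast]
    exact coef_ineq a hapos N n
  exact Real.sqrt_le_sqrt hfin
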